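/- (Nemhauser–Trotter) Let G be a finite simple graph and let x : V(G) → ℝ be an optimal fractional vertex cover of G. Let V_1 = {v : x(v) > 1/2} and V_{1/2} = {v : x(v) = 1/2}. Then G has a minimum vertex cover X such that V_1 ⊆ X ⊆ V_1 ∪ V_{1/2}. -/
import Mathlib


/-- `X` is a vertex cover of `G`: every edge has at least one endpoint in `X`. -/
def IsVC {V : Type*} (G : SimpleGraph V) (X : Set V) : Prop :=
  ∀ ⦃u w : V⦄, G.Adj u w → u ∈ X ∨ w ∈ X

/-- `x` is a fractional vertex cover of `G`. -/
def IsFracVC {V : Type*} (G : SimpleGraph V) (x : V → ℝ) : Prop :=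
  (∀ v, 0 ≤ x v) ∧ ∀ ⦃u w : V⦄, G.Adj u w → 1 ≤ x u + x w

theorem stmt_5 {V : Type*} [Fintype V] (G : SimpleGraph V) (x : V → ℝ)
    (hx : IsFracVC G x)
    (hopt : ∀ y : V → ℝ, IsFracVC G y → ∑ v, x v ≤ ∑ v, y v) :
    ∃ X : Set V, IsVC G X ∧
      (∀ Y : Set V, IsVC G Y → X.ncard ≤ Y.ncard) ∧
      (∀ v, 1 / 2 < x v → v ∈ X) ∧
      (∀ v ∈ X, 1 / 2 < x v ∨ x v = 1 / 2) := by
  classical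
  -- obtain a minimum vertex cover C
  have hne : {n | ∃ C : Set V, IsVC G C ∧ C.ncard = n}.Nonempty :=
    ⟨(Set.univ : Set V).ncard, Set.univ, fun u w _ => Or.inl trivial, rfl⟩
  obtain ⟨C, hC, hCcard⟩ := Nat.sInf_mem hne
  have hCmin : ∀ Y : Set V, IsVC G Y → C.ncard ≤ Y.ncard := by
    intro Y hY
    rw [hCcard]
    exact Nat.sInf_le ⟨Y, hY, rfl⟩
  set A : Finset V := Finset.univ.filter (fun v => 1/2 < x v ∧ v ∉ C) with hAdef
  set B : Finset V := Finset.univ.filter (fun v => v ∈ C ∧ x v < 1/2) with hBdef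
  set D : Finset V := Finset.univ.filter (fun v => v ∈ C ∧ 1/2 ≤ x v) with hDdef
  have hmemA : ∀ v, v ∈ A ↔ (1/2 < x v ∧ v ∉ C) := by
    intro v; simp [hAdef]
  have hmemB : ∀ v, v ∈ B ↔ (v ∈ C ∧ x v < 1/2) := by
    intro v; simp [hBdef]
  have hmemD : ∀ v, v ∈ D ↔ (v ∈ C ∧ 1/2 ≤ x v) := by
    intro v; simp [hDdef]
  -- the key inequality |A| ≤ |B|, by local optimality of x
  have hkey : A.card ≤ B.card := by
    rcases A.eq_empty_or_nonempty with h | hAne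
    · simp [h]
    · set ε : ℝ := A.inf' hAne (fun v => x v - 1/2) with hεdef
      have hεle : ∀ v ∈ A, ε ≤ x v - 1/2 := fun v hv => Finset.inf'_le _ hv
      have hεpos : 0 < ε := by
        rw [hεdef, Finset.lt_inf'_iff]
        intro v hv
        have := (hmemA v).mp hv
        linarith [this.1]
      set y : V → ℝ := fun v => x v + (if v ∈ B then ε else 0) - (if v ∈ A then ε else 0)
        with hydef
      have hAB : ∀ v, v ∈ A → v ∉ B := by
        intro v hv hvB
        exact ((hmemA v).mp hv).2 ((hmemB v).mp hvB).1
      have hy : IsFracVC G y := by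
        constructor
        · intro v
          by_cases hv : v ∈ A
          · have h1 := ((hmemA v).mp hv).1
            have h2 := hεle v hv
            simp only [hydef, hv, hAB v hv, if_true, if_false]
            linarith
          · have := hx.1 v
            simp only [hydef, hv, if_false]
            split <;> linarith
        · have hAcase : ∀ u w, G.Adj u w → u ∈ A → 1 ≤ y u + y w := by
            intro u w h hu
            obtain ⟨hxu, huC⟩ := (hmemA u).mp hu
            have hwC : w ∈ C := (hC h).resolve_left huC
            have hwA : w ∉ A := fun hw => ((hmemA w).mp hw).2 hwC
            have hsum := hx.2 h
            by_cases hwB : w ∈ B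
            · simp only [hydef, hu, hAB u hu, hwA, hwB, if_true, if_false]
              linarith
            · have hxw : 1/2 ≤ x w := by
                by_contra hlt
                exact hwB ((hmemB w).mpr ⟨hwC, not_le.mp hlt⟩)
              have := hεle u hu
              simp only [hydef, hu, hAB u hu, hwA, hwB, if_true, if_false]
              linarith
          intro u w h
          by_cases hu : u ∈ A
          · exact hAcase u w h hu
          by_cases hw : w ∈ A
          · rw [add_comm]; exact hAcase w u h.symm hw
          · have hsum := hx.2 h
            simp only [hydef, hu, hw, if_false]
            split <;> split <;> linarith
      have hsumy : ∑ v, y v = ∑ v, x v + (B.card : ℝ) * ε - (A.card : ℝ) * ε := by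
        simp only [hydef]
        rw [Finset.sum_sub_distrib, Finset.sum_add_distrib]
        congr 1
        · congr 1
          rw [Finset.sum_ite_mem, Finset.univ_inter, Finset.sum_const, nsmul_eq_mul]
        · rw [Finset.sum_ite_mem, Finset.univ_inter, Finset.sum_const, nsmul_eq_mul]
      have := hopt y hy
      rw [hsumy] at this
      have hcast : (A.card : ℝ) ≤ (B.card : ℝ) := by
        have hAB' : (A.card : ℝ) * ε ≤ (B.card : ℝ) * ε := by linarith
        exact le_of_mul_le_mul_right hAB' hεpos
      exact_mod_cast hcast
  -- B and D partition C
  have hBD : Disjoint B D := by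
    rw [Finset.disjoint_left]
    intro v hvB hvD
    exact absurd ((hmemD v).mp hvD).2 (not_le.mpr ((hmemB v).mp hvB).2)
  have hBDC : B ∪ D = C.toFinset := by
    ext v
    simp only [Finset.mem_union, hmemB v, hmemD v, Set.mem_toFinset]
    constructor
    · rintro (⟨h, _⟩ | ⟨h, _⟩) <;> exact h
    · intro h
      rcases lt_or_ge (x v) (1/2) with h' | h'
      · exact Or.inl ⟨h, h'⟩
      · exact Or.inr ⟨h, h'⟩
  have hAD : Disjoint A D := by
    rw [Finset.disjoint_left]
    intro v hvA hvD
    exact ((hmemA v).mp hvA).2 ((hmemD v).mp hvD).1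
  have hcardC : B.card + D.card = C.ncard := by
    rw [← Finset.card_union_of_disjoint hBD, hBDC, Set.ncard_eq_toFinset_card' C]
  refine ⟨↑(A ∪ D), ?_, ?_, ?_, ?_⟩
  · -- vertex cover
    intro u w h
    simp only [Finset.coe_union, Set.mem_union, Finset.mem_coe]
    have key : ∀ v, 1/2 < x v → v ∈ A ∨ v ∈ D := by
      intro v hv
      by_cases hvC : v ∈ C
      · exact Or.inr ((hmemD v).mpr ⟨hvC, le_of_lt hv⟩)
      · exact Or.inl ((hmemA v).mpr ⟨hv, hvC⟩)
    rcases lt_or_ge (1/2 : ℝ) (x u) with h' | h'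
    · exact Or.inl (key u h')
    rcases lt_or_ge (1/2 : ℝ) (x w) with h'' | h''
    · exact Or.inr (key w h'')
    -- both ≤ 1/2, so both = 1/2; use cover C
    have hsum := hx.2 h
    have hxu : x u = 1/2 := by linarith
    have hxw : x w = 1/2 := by linarith
    rcases hC h with hu | hw
    · exact Or.inl (Or.inr ((hmemD u).mpr ⟨hu, le_of_eq hxu.symm⟩))
    · exact Or.inr (Or.inr ((hmemD w).mpr ⟨hw, le_of_eq hxw.symm⟩))
  · -- minimality
    intro Y hY
    calc (↑(A ∪ D) : Set V).ncard = (A ∪ D).card := Set.ncard_coe_finset _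
      _ = A.card + D.card := Finset.card_union_of_disjoint hAD
      _ ≤ B.card + D.card := by omega
      _ = C.ncard := hcardC
      _ ≤ Y.ncard := hCmin Y hY
  · intro v hv
    simp only [Finset.coe_union, Set.mem_union, Finset.mem_coe]
    by_cases hvC : v ∈ C
    · exact Or.inr ((hmemD v).mpr ⟨hvC, le_of_lt hv⟩)
    · exact Or.inl ((hmemA v).mpr ⟨hv, hvC⟩)
  · intro v hv
    simp only [Finset.coe_union, Set.mem_union, Finset.mem_coe] at hv
    rcases hv with hv | hv
    · exact Or.inl ((hmemA v).mp hv).1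
    · rcases lt_or_eq_of_le ((hmemD v).mp hv).2 with h | h
      · exact Or.inl h
      · exact Or.inr h.symm
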